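/- Let X be a finite nonempty set, f : X → ℝ, λ > 0, γ > 0, π₀ the uniform pmf on X, α(g) = (λ/(λ+γ))^g for real g ≥ 0, and π_g(x) ∝ exp(-(1-α(g))f(x)/γ). Then d/dg E_{π_g}[f] = -α(g)·log((λ+γ)/λ)·(1/γ)·Var_{π_g}(f) ≤ 0, so E_{π_g}[f] is non-increasing in g. -/

import Mathlib

open Real BigOperators Finset Filter

def IsPMF {X : Type*} [Fintype X] (p : X → ℝ) : Prop :=
  (∀ x, 0 ≤ p x) ∧ ∑ x, p x = 1

noncomputable def expVal {X : Type*} [Fintype X] (p f : X → ℝ) : ℝ := ∑ x, p x * f x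

noncomputable def varVal {X : Type*} [Fintype X] (p f : X → ℝ) : ℝ :=
  expVal p (fun x => f x ^ 2) - (expVal p f) ^ 2

noncomputable def covVal {X : Type*} [Fintype X] (p u v : X → ℝ) : ℝ :=
  expVal p (fun x => u x * v x) - expVal p u * expVal p v

noncomputable def klDiv' {X : Type*} [Fintype X] (p q : X → ℝ) : ℝ :=
  ∑ x, p x * Real.log (p x / q x)

noncomputable def entropyF {X : Type*} [Fintype X] (p : X → ℝ) : ℝ :=
  -∑ x, p x * Real.log (p x)

noncomputable def tilt {X : Type*} [Fintype X] (π₀ f : X → ℝ) (g : ℝ) (x : X) : ℝ :=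
  π₀ x * Real.exp (-g * f x) / ∑ y, π₀ y * Real.exp (-g * f y)


noncomputable def pg10 {X : Type*} [Fintype X] (f : X → ℝ) (lam γ s : ℝ) (x : X) : ℝ :=
  Real.exp (-((1 - (lam / (lam + γ)) ^ s) * f x / γ)) /
    ∑ y, Real.exp (-((1 - (lam / (lam + γ)) ^ s) * f y / γ))

section helpers

variable {X : Type*} [Fintype X] [Nonempty X]

lemma sumexp_pos' (w : X → ℝ) : 0 < ∑ y, Real.exp (w y) :=
  Finset.sum_pos (fun y _ => Real.exp_pos _) Finset.univ_nonempty

lemma varVal_nonneg_of (p f : X → ℝ) (hp0 : ∀ x, 0 ≤ p x) (hp1 : ∑ x, p x = 1) :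
    0 ≤ varVal p f := by
  have key : varVal p f = ∑ x, p x * (f x - expVal p f) ^ 2 := by
    have h : ∀ x : X, p x * (f x - expVal p f) ^ 2
        = p x * f x ^ 2 - 2 * expVal p f * (p x * f x) + (expVal p f) ^ 2 * p x := by
      intro x; ring
    rw [Finset.sum_congr rfl (fun x _ => h x)]
    rw [Finset.sum_add_distrib, Finset.sum_sub_distrib, ← Finset.mul_sum, ← Finset.mul_sum, hp1]
    simp only [varVal, expVal]
    ring
  rw [key]
  exact Finset.sum_nonneg fun x _ => mul_nonneg (hp0 x) (sq_nonneg _)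

/-- derivative of t ↦ (∑ e^{-t f} f)/(∑ e^{-t f}) is minus the variance. -/
lemma hasDerivAt_E (f : X → ℝ) (t : ℝ) :
    HasDerivAt
      (fun t : ℝ => (∑ x, Real.exp (-(t * f x)) * f x) / (∑ x, Real.exp (-(t * f x))))
      (-((∑ x, Real.exp (-(t * f x)) * f x ^ 2) / (∑ x, Real.exp (-(t * f x)))
        - ((∑ x, Real.exp (-(t * f x)) * f x) / (∑ x, Real.exp (-(t * f x)))) ^ 2)) t := by
  have hexp : ∀ x : X, HasDerivAt (fun t : ℝ => Real.exp (-(t * f x)))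
      (Real.exp (-(t * f x)) * (-(f x))) t := fun x =>
    ((hasDerivAt_mul_const (f x)).neg).exp
  have hM : HasDerivAt (fun t : ℝ => ∑ x, Real.exp (-(t * f x)) * f x)
      (∑ x, Real.exp (-(t * f x)) * (-(f x)) * f x) t :=
    HasDerivAt.fun_sum fun x _ => (hexp x).mul_const (f x)
  have hN : HasDerivAt (fun t : ℝ => ∑ x, Real.exp (-(t * f x)))
      (∑ x, Real.exp (-(t * f x)) * (-(f x))) t :=
    HasDerivAt.fun_sum fun x _ => hexp x
  have hN0 : (∑ x, Real.exp (-(t * f x))) ≠ 0 := (sumexp_pos' _).ne'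
  have hdiv := hM.div hN hN0
  refine hdiv.congr_deriv ?_
  have e1 : (∑ x, Real.exp (-(t * f x)) * (-(f x)) * f x)
      = -(∑ x, Real.exp (-(t * f x)) * f x ^ 2) := by
    rw [← Finset.sum_neg_distrib]
    exact Finset.sum_congr rfl fun x _ => by ring
  have e2 : (∑ x, Real.exp (-(t * f x)) * (-(f x)))
      = -(∑ x, Real.exp (-(t * f x)) * f x) := by
    rw [← Finset.sum_neg_distrib]
    exact Finset.sum_congr rfl fun x _ => by ring
  rw [e1, e2]
  field_simp
  ring

lemma pg10_eq (f : X → ℝ) (lam γ : ℝ) (s : ℝ) (x : X) :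
    pg10 f lam γ s x
      = Real.exp (-(((1 - (lam / (lam + γ)) ^ s) / γ) * f x))
        / ∑ y, Real.exp (-(((1 - (lam / (lam + γ)) ^ s) / γ) * f y)) := by
  have h : ∀ z : X, -((1 - (lam / (lam + γ)) ^ s) * f z / γ)
      = -(((1 - (lam / (lam + γ)) ^ s) / γ) * f z) := fun z => by ring
  simp only [pg10, h]

lemma expVal_pg10 (f g : X → ℝ) (lam γ : ℝ) (s : ℝ) :
    expVal (pg10 f lam γ s) g
      = (∑ x, Real.exp (-(((1 - (lam / (lam + γ)) ^ s) / γ) * f x)) * g x)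
        / ∑ x, Real.exp (-(((1 - (lam / (lam + γ)) ^ s) / γ) * f x)) := by
  simp only [expVal, pg10_eq, div_mul_eq_mul_div, ← Finset.sum_div]

/-- The derivative formula, valid at every real `g`. -/
lemma main_deriv (f : X → ℝ) (lam γ : ℝ) (hlam : 0 < lam) (hγ : 0 < γ) (g : ℝ) :
    HasDerivAt (fun s : ℝ => expVal (pg10 f lam γ s) f)
      (-((lam / (lam + γ)) ^ g * Real.log ((lam + γ) / lam) * (1 / γ) *
        varVal (pg10 f lam γ g) f)) g := by
  set r : ℝ := lam / (lam + γ) with hr_def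
  have hlg : 0 < lam + γ := by linarith
  have hr : 0 < r := div_pos hlam hlg
  set β : ℝ → ℝ := fun s => (1 - r ^ s) / γ with hβ_def
  have hβ : HasDerivAt β (-(r ^ g * Real.log r) / γ) g :=
    (((Real.hasStrictDerivAt_const_rpow hr g).hasDerivAt).const_sub 1).div_const γ
  have hE := hasDerivAt_E f (β g)
  have hcomp := HasDerivAt.comp g hE hβ
  have hfun : (fun s : ℝ =>
      (∑ x, Real.exp (-(β s * f x)) * f x) / (∑ x, Real.exp (-(β s * f x))))
      = fun s : ℝ => expVal (pg10 f lam γ s) f := by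
    funext s
    rw [expVal_pg10]
  have hvar : varVal (pg10 f lam γ g) f
      = (∑ x, Real.exp (-(β g * f x)) * f x ^ 2) / (∑ x, Real.exp (-(β g * f x)))
        - ((∑ x, Real.exp (-(β g * f x)) * f x) / (∑ x, Real.exp (-(β g * f x)))) ^ 2 := by
    rw [varVal, expVal_pg10, expVal_pg10]
  have hlog : Real.log r = -Real.log ((lam + γ) / lam) := by
    rw [hr_def, ← Real.log_inv, inv_div]
  have := hcomp
  rw [Function.comp_def] at this
  simp only [hfun] at this
  refine this.congr_deriv ?_
  rw [hvar, hlog]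
  ring
end helpers

theorem erpic_expectation_derivative_uniform_prior {X : Type*} [Fintype X] [Nonempty X]
    (f : X → ℝ) (lam γ : ℝ) (hlam : 0 < lam) (hγ : 0 < γ) :
    (∀ g : ℝ, 0 ≤ g →
      HasDerivAt (fun s : ℝ => expVal (pg10 f lam γ s) f)
        (-((lam / (lam + γ)) ^ g * Real.log ((lam + γ) / lam) * (1 / γ) *
          varVal (pg10 f lam γ g) f)) g ∧
      -((lam / (lam + γ)) ^ g * Real.log ((lam + γ) / lam) * (1 / γ) *
          varVal (pg10 f lam γ g) f) ≤ 0) ∧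
    (∀ g₁ g₂ : ℝ, 0 ≤ g₁ → g₁ ≤ g₂ →
      expVal (pg10 f lam γ g₂) f ≤ expVal (pg10 f lam γ g₁) f) := by
  have hlg : 0 < lam + γ := by linarith
  have hnonpos : ∀ g : ℝ,
      -((lam / (lam + γ)) ^ g * Real.log ((lam + γ) / lam) * (1 / γ) *
        varVal (pg10 f lam γ g) f) ≤ 0 := by
    intro g
    have hvar : 0 ≤ varVal (pg10 f lam γ g) f := by
      apply varVal_nonneg_of
      · intro x
        exact div_nonneg (Real.exp_pos _).le (sumexp_pos' _).le
      · simp only [pg10]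
        rw [← Finset.sum_div, div_self (sumexp_pos' _).ne']
    have hlog : 0 ≤ Real.log ((lam + γ) / lam) :=
      Real.log_nonneg (by rw [le_div_iff₀ hlam]; linarith)
    have hpow : 0 ≤ (lam / (lam + γ)) ^ g :=
      (Real.rpow_pos_of_pos (div_pos hlam hlg) g).le
    have : 0 ≤ (lam / (lam + γ)) ^ g * Real.log ((lam + γ) / lam) * (1 / γ) *
        varVal (pg10 f lam γ g) f := by positivity
    linarith
  refine ⟨fun g _ => ⟨main_deriv f lam γ hlam hγ g, hnonpos g⟩, ?_⟩
  intro g₁ g₂ hg₁ hle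
  have hanti : AntitoneOn (fun s : ℝ => expVal (pg10 f lam γ s) f) (Set.Ici (0 : ℝ)) := by
    apply antitoneOn_of_deriv_nonpos (convex_Ici 0)
    · exact fun x _ => (main_deriv f lam γ hlam hγ x).differentiableAt.continuousAt.continuousWithinAt
    · exact fun x _ => (main_deriv f lam γ hlam hγ x).differentiableAt.differentiableWithinAt
    · intro x _
      rw [(main_deriv f lam γ hlam hγ x).deriv]
      exact hnonpos x
  exact hanti hg₁ (le_trans hg₁ hle) hle
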